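/- Let Σ be a real symmetric positive semidefinite p×p matrix, M a real p×K matrix, and θ ∈ ℝ^K. Let a_k denote the k-th column of A. Let U₂ be a real p×K matrix with orthonormal columns whose column span equals the column span of X(X^⊤X)⁻¹A, and let U₃ be a real p×(p−n) matrix with orthonormal columns satisfying U₃U₃^⊤ = I_p − X(X^⊤X)⁻¹X^⊤. Define v_k = ‖θ‖² · a_k^⊤(X^⊤X)⁻¹X^⊤ Σ X(X^⊤X)⁻¹a_k and w_k = a_k^⊤(X^⊤X)⁻¹a_k · [‖θ‖² · trace(U₃^⊤ Σ U₃) + θ^⊤M^⊤U₃U₃^⊤Mθ] / (p−n). Then for every k, v_k − w_k ≥ ‖θ‖² · a_k^⊤(X^⊤X)⁻¹a_k · [λ_min(U₂^⊤ Σ U₂) − trace(U₃^⊤ Σ U₃)/(p−n) − trace(U₃^⊤ M M^⊤ U₃)/(p−n)], where λ_min denotes the smallest eigenvalue of a symmetric matrix. -/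

import Mathlib

open Matrix



lemma quad_transfer {m l : Type*} [Fintype m] [Fintype l] (P : Matrix m l ℝ)
    (S : Matrix m m ℝ) (x : l → ℝ) :
    x ⬝ᵥ ((Pᵀ * S * P) *ᵥ x) = (P *ᵥ x) ⬝ᵥ (S *ᵥ (P *ᵥ x)) := by
  rw [← mulVec_mulVec, ← mulVec_mulVec, dotProduct_mulVec, ← mulVec_transpose, transpose_transpose]

lemma rayleigh_aux {m : Type*} [Fintype m] [DecidableEq m] {H : Matrix m m ℝ}
    (hH : H.IsHermitian) (c : m → ℝ) :
    (⨅ i, hH.eigenvalues i) * (c ⬝ᵥ c) ≤ c ⬝ᵥ H *ᵥ c := by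
  classical
  rcases isEmpty_or_nonempty m with h | h
  · simp [dotProduct]
  have hVstar : (hH.eigenvectorUnitary : Matrix m m ℝ) * star (hH.eigenvectorUnitary : Matrix m m ℝ) = 1 :=
    (Matrix.mem_unitaryGroup_iff).mp hH.eigenvectorUnitary.2
  set V : Matrix m m ℝ := (hH.eigenvectorUnitary : Matrix m m ℝ) with hV
  have hstar : star V = Vᵀ := by
    rw [star_eq_conjTranspose, conjTranspose_eq_transpose_of_trivial]
  set y : m → ℝ := Vᵀ *ᵥ c with hy
  have hcc : c ⬝ᵥ c = y ⬝ᵥ y := by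
    have : c ⬝ᵥ c = c ⬝ᵥ ((V * Vᵀ) *ᵥ c) := by rw [← hstar, hVstar, one_mulVec]
    rw [this, ← mulVec_mulVec, dotProduct_mulVec, ← mulVec_transpose]
  have hquad : c ⬝ᵥ H *ᵥ c = ∑ i, hH.eigenvalues i * (y i)^2 := by
    have hspec := hH.spectral_theorem
    rw [Unitary.conjStarAlgAut_apply, hstar] at hspec
    calc c ⬝ᵥ H *ᵥ c = c ⬝ᵥ ((V * diagonal (RCLike.ofReal ∘ hH.eigenvalues) * Vᵀ) *ᵥ c) := by
          rw [← hspec]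
      _ = y ⬝ᵥ (diagonal (RCLike.ofReal ∘ hH.eigenvalues) *ᵥ y) := by
          rw [mul_assoc, ← mulVec_mulVec, dotProduct_mulVec, ← mulVec_transpose, ← mulVec_mulVec]
      _ = ∑ i, hH.eigenvalues i * (y i)^2 := by
          simp only [dotProduct, mulVec_diagonal, Function.comp_apply, RCLike.ofReal_real_eq_id, id]
          exact Finset.sum_congr rfl fun i _ => by ring
  rw [hquad, hcc]
  have : (⨅ i, hH.eigenvalues i) * (y ⬝ᵥ y) = ∑ i, (⨅ j, hH.eigenvalues j) * (y i)^2 := by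
    simp [dotProduct, Finset.mul_sum, pow_two]
  rw [this]
  apply Finset.sum_le_sum
  intro i _
  have hle : (⨅ j, hH.eigenvalues j) ≤ hH.eigenvalues i :=
    ciInf_le (Finite.bddBelow_range _) i
  nlinarith [sq_nonneg (y i)]

lemma psd_trace_nonneg {m : Type*} [Fintype m] [DecidableEq m] {M : Matrix m m ℝ}
    (hM : M.PosSemidef) : 0 ≤ M.trace := by
  refine Finset.sum_nonneg fun i _ => ?_
  have := hM.dotProduct_mulVec_nonneg (Pi.single i 1)
  simpa [Matrix.mulVec_single_one] using this

/-- Lower bound on the bias `v_k − w_k` of the RTS squared standard errors in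
the general source apportionment model. -/
theorem stmt_9 (p n K : ℕ) (hK : 0 < K) (hKn : K ≤ n) (hnp : n < p)
    (X : Matrix (Fin p) (Fin n) ℝ) (A : Matrix (Fin n) (Fin K) ℝ)
    (hX : IsUnit (Xᵀ * X)) (hA : IsUnit (Aᵀ * A))
    (Sg : Matrix (Fin p) (Fin p) ℝ) (hSg : Sg.PosSemidef)
    (M : Matrix (Fin p) (Fin K) ℝ)
    (θ : EuclideanSpace ℝ (Fin K))
    (U₂ : Matrix (Fin p) (Fin K) ℝ) (hU₂o : U₂ᵀ * U₂ = 1)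
    (hU₂span : LinearMap.range (Matrix.mulVecLin U₂)
      = LinearMap.range (Matrix.mulVecLin (X * (Xᵀ * X)⁻¹ * A)))
    (U₃ : Matrix (Fin p) (Fin (p - n)) ℝ) (hU₃o : U₃ᵀ * U₃ = 1)
    (hU₃ : U₃ * U₃ᵀ = 1 - X * (Xᵀ * X)⁻¹ * Xᵀ)
    (hH : (U₂ᵀ * Sg * U₂).IsHermitian) :
    ∀ k : Fin K,
      ‖θ‖ ^ 2 * ((fun i => A i k) ⬝ᵥ
          ((Xᵀ * X)⁻¹ * Xᵀ * Sg * X * (Xᵀ * X)⁻¹).mulVec (fun i => A i k))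
        - ((fun i => A i k) ⬝ᵥ ((Xᵀ * X)⁻¹).mulVec (fun i => A i k)) *
          (‖θ‖ ^ 2 * (U₃ᵀ * Sg * U₃).trace
            + θ ⬝ᵥ (Mᵀ * U₃ * U₃ᵀ * M).mulVec θ) / ((p : ℝ) - (n : ℝ))
      ≥ ‖θ‖ ^ 2 * ((fun i => A i k) ⬝ᵥ ((Xᵀ * X)⁻¹).mulVec (fun i => A i k)) *
          ((⨅ i, hH.eigenvalues i) - (U₃ᵀ * Sg * U₃).trace / ((p : ℝ) - (n : ℝ))
            - (U₃ᵀ * M * Mᵀ * U₃).trace / ((p : ℝ) - (n : ℝ))) := by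
  intro k
  have hdet : IsUnit (Xᵀ * X).det := (isUnit_iff_isUnit_det _).mp hX
  have hBX : (Xᵀ * X)⁻¹ * (Xᵀ * X) = 1 := nonsing_inv_mul _ hdet
  have hXpsd : (Xᵀ * X).PosSemidef := by
    have := posSemidef_conjTranspose_mul_self X
    rwa [conjTranspose_eq_transpose_of_trivial] at this
  have hBpsd : ((Xᵀ * X)⁻¹).PosSemidef := hXpsd.inv
  set B := (Xᵀ * X)⁻¹ with hBdef
  set a : Fin n → ℝ := fun i => A i k with hadef
  have hBsymm : Bᵀ = B := by
    have := hBpsd.isHermitian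
    rwa [IsHermitian, conjTranspose_eq_transpose_of_trivial] at this
  have hβ : 0 ≤ a ⬝ᵥ B *ᵥ a := by simpa using hBpsd.dotProduct_mulVec_nonneg a
  have hd : (0:ℝ) < (p:ℝ) - (n:ℝ) := by
    have : (n:ℝ) < (p:ℝ) := by exact_mod_cast hnp
    linarith
  have hT1 : 0 ≤ (U₃ᵀ * Sg * U₃).trace := by
    apply psd_trace_nonneg
    have := hSg.conjTranspose_mul_mul_same U₃
    rwa [conjTranspose_eq_transpose_of_trivial] at this
  have hθ : ‖θ‖^2 = ∑ j, θ j ^ 2 := by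
    rw [EuclideanSpace.norm_eq, Real.sq_sqrt (Finset.sum_nonneg fun _ _ => sq_nonneg _)]
    simp [Real.norm_eq_abs, sq_abs]
  have hθ0 : 0 ≤ ‖θ‖^2 := sq_nonneg _
  -- bound on q
  have hq : θ ⬝ᵥ (Mᵀ * U₃ * U₃ᵀ * M) *ᵥ θ ≤ ‖θ‖^2 * (U₃ᵀ * M * Mᵀ * U₃).trace := by
    set N := U₃ᵀ * M with hN
    have hmat : Mᵀ * U₃ * U₃ᵀ * M = Nᵀ * (1 : Matrix (Fin (p-n)) (Fin (p-n)) ℝ) * N := by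
      simp only [Matrix.mul_one, hN, transpose_mul, transpose_transpose, Matrix.mul_assoc]
    rw [hmat, quad_transfer, one_mulVec]
    have htr : (U₃ᵀ * M * Mᵀ * U₃).trace = ∑ i, ∑ j, N i j ^ 2 := by
      have h5 : U₃ᵀ * M * Mᵀ * U₃ = N * Nᵀ := by
        simp only [hN, transpose_mul, transpose_transpose, Matrix.mul_assoc]
      rw [h5]
      simp [Matrix.trace, Matrix.diag, Matrix.mul_apply, pow_two]
    have hdp : (N *ᵥ θ) ⬝ᵥ (N *ᵥ θ) = ∑ i, (∑ j, N i j * θ j)^2 := by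
      simp [dotProduct, mulVec, pow_two]
    rw [htr, hθ, hdp]
    calc ∑ i, (∑ j, N i j * θ j)^2
        ≤ ∑ i, ((∑ j, N i j ^2) * ∑ j, θ j ^2) :=
          Finset.sum_le_sum fun i _ => Finset.sum_mul_sq_le_sq_mul_sq _ _ _
      _ = (∑ j, θ j ^ 2) * ∑ i, ∑ j, N i j ^2 := by rw [← Finset.sum_mul, mul_comm]
  -- main eigenvalue bound
  obtain ⟨c, hc⟩ : ∃ c, U₂ *ᵥ c = (X * B) *ᵥ a := by
    have hz : (X * B) *ᵥ a ∈ LinearMap.range (mulVecLin (X * B * A)) := by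
      refine ⟨Pi.single k 1, ?_⟩
      have hA1 : A *ᵥ Pi.single k 1 = a := by
        rw [mulVec_single_one]
        ext i
        simp [hadef]
      rw [mulVecLin_apply, ← Matrix.mulVec_mulVec, hA1]
    rw [← hU₂span] at hz
    obtain ⟨c, hc⟩ := hz
    exact ⟨c, by simpa [mulVecLin_apply] using hc⟩
  have hcc : c ⬝ᵥ c = a ⬝ᵥ B *ᵥ a := by
    have h1 := quad_transfer U₂ 1 c
    rw [Matrix.mul_one, hU₂o, one_mulVec, one_mulVec, hc] at h1
    have h2 := quad_transfer (X * B) 1 a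
    have h3 : (X * B)ᵀ * (1 : Matrix (Fin p) (Fin p) ℝ) * (X * B) = B := by
      rw [Matrix.mul_one, transpose_mul, hBsymm, Matrix.mul_assoc,
        ← Matrix.mul_assoc Xᵀ X B, ← Matrix.mul_assoc B (Xᵀ * X) B, hBX, Matrix.one_mul]
    rw [h3, one_mulVec] at h2
    exact h1.trans h2.symm
  have hveq : a ⬝ᵥ (B * Xᵀ * Sg * X * B) *ᵥ a = ((X * B) *ᵥ a) ⬝ᵥ (Sg *ᵥ ((X * B) *ᵥ a)) := by
    have h6 : B * Xᵀ * Sg * X * B = (X * B)ᵀ * Sg * (X * B) := by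
      rw [transpose_mul, hBsymm]
      simp only [Matrix.mul_assoc]
    rw [h6, quad_transfer]
  have hlow : (⨅ i, hH.eigenvalues i) * (a ⬝ᵥ B *ᵥ a) ≤ a ⬝ᵥ (B * Xᵀ * Sg * X * B) *ᵥ a := by
    have h4 := rayleigh_aux hH c
    rw [quad_transfer, hc] at h4
    rw [hveq, ← hcc]
    exact h4
  rw [ge_iff_le, ← sub_nonneg]
  have expand : ‖θ‖ ^ 2 * (a ⬝ᵥ (B * Xᵀ * Sg * X * B) *ᵥ a)
        - (a ⬝ᵥ B *ᵥ a) *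
          (‖θ‖ ^ 2 * (U₃ᵀ * Sg * U₃).trace + θ ⬝ᵥ (Mᵀ * U₃ * U₃ᵀ * M) *ᵥ θ) / ((p : ℝ) - (n : ℝ))
      - ‖θ‖ ^ 2 * (a ⬝ᵥ B *ᵥ a) *
          ((⨅ i, hH.eigenvalues i) - (U₃ᵀ * Sg * U₃).trace / ((p : ℝ) - (n : ℝ))
            - (U₃ᵀ * M * Mᵀ * U₃).trace / ((p : ℝ) - (n : ℝ)))
      = (‖θ‖ ^ 2 * (a ⬝ᵥ (B * Xᵀ * Sg * X * B) *ᵥ a)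
          - ‖θ‖ ^ 2 * ((⨅ i, hH.eigenvalues i) * (a ⬝ᵥ B *ᵥ a)))
        + ((a ⬝ᵥ B *ᵥ a) * (‖θ‖ ^ 2 * (U₃ᵀ * M * Mᵀ * U₃).trace
            - θ ⬝ᵥ (Mᵀ * U₃ * U₃ᵀ * M) *ᵥ θ)) / ((p : ℝ) - (n : ℝ)) := by
    field_simp
    ring
  rw [expand]
  have h5 : ‖θ‖ ^ 2 * ((⨅ i, hH.eigenvalues i) * (a ⬝ᵥ B *ᵥ a))
      ≤ ‖θ‖ ^ 2 * (a ⬝ᵥ (B * Xᵀ * Sg * X * B) *ᵥ a) :=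
    mul_le_mul_of_nonneg_left hlow hθ0
  exact add_nonneg (sub_nonneg.2 h5)
    (div_nonneg (mul_nonneg hβ (sub_nonneg.2 hq)) hd.le)
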